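/- Let ξ₁,…,ξ_n be iid real random variables with Eξ₁ = 0, Eξ₁² ≤ λ₁ for some constant λ₁ > 0, and E|ξ₁|³ ≤ C/λ^{3/2} for constants C > 0 and 0 < λ ≤ λ₁. Then there is a constant c, depending only on C and λ₁ (not on n or λ), such that E|∑_{i=1}^n ξ_i|³ ≤ c (n/λ)^{3/2}. -/

import Mathlib

open MeasureTheory ProbabilityTheory

private lemma abs_add_cube_le'' (x y : ℝ) :
    |x + y| ^ 3 ≤ |x| ^ 3 + 3 * (x * |x|) * y + 3 * y ^ 2 * |x| + 3 * |y| ^ 3 := by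
  rcases abs_cases x with ⟨hx, hx'⟩ | ⟨hx, hx'⟩ <;>
  rcases abs_cases y with ⟨hy, hy'⟩ | ⟨hy, hy'⟩ <;>
  rcases abs_cases (x + y) with ⟨h, h'⟩ | ⟨h, h'⟩ <;>
  rw [hx, hy, h] <;>
  nlinarith [sq_nonneg x, sq_nonneg y, sq_nonneg (x + y), sq_nonneg (x - y), mul_self_nonneg (x*y)]

private lemma sqrt_cube_add'' (u d : ℝ) (hu : 0 ≤ u) (hd : 0 ≤ d) :
    Real.sqrt (u ^ 3) + d * Real.sqrt u ≤ Real.sqrt ((u + d) ^ 3) := by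
  have h1 : Real.sqrt (u ^ 3) ^ 2 = u ^ 3 := Real.sq_sqrt (by positivity)
  have h2 : Real.sqrt u ^ 2 = u := Real.sq_sqrt hu
  have h3 : Real.sqrt (u ^ 3) * Real.sqrt u = u ^ 2 := by
    rw [← Real.sqrt_mul (by positivity), show u ^ 3 * u = (u ^ 2) ^ 2 by ring,
      Real.sqrt_sq (by positivity)]
  rw [Real.le_sqrt (by positivity) (by positivity)]
  have key : (Real.sqrt (u ^ 3) + d * Real.sqrt u) ^ 2 = u ^ 3 + 2 * d * u ^ 2 + d ^ 2 * u := by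
    calc (Real.sqrt (u ^ 3) + d * Real.sqrt u) ^ 2
        = Real.sqrt (u ^ 3) ^ 2 + 2 * d * (Real.sqrt (u ^ 3) * Real.sqrt u)
          + d ^ 2 * Real.sqrt u ^ 2 := by ring
      _ = u ^ 3 + 2 * d * u ^ 2 + d ^ 2 * u := by rw [h1, h2, h3]
  nlinarith [mul_nonneg hd (mul_nonneg hu hu), mul_nonneg (mul_nonneg hd hd) hu,
    mul_nonneg (mul_nonneg hd hd) hd]

private lemma rpow_three_halves'' (x : ℝ) (hx : 0 ≤ x) :
    x ^ ((3 : ℝ) / 2) = Real.sqrt (x ^ 3) := by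
  rw [Real.sqrt_eq_rpow, ← Real.rpow_natCast x 3, ← Real.rpow_mul hx]
  norm_num

/-- For iid mean-zero real random variables with `Eξ₁² ≤ λ₁` and `E|ξ₁|³ ≤ C/λ^{3/2}`
(`0 < λ ≤ λ₁`), there is a constant `c` depending only on `C` and `λ₁` such that
`E|∑_{i=1}^n ξ_i|³ ≤ c (n/λ)^{3/2}`. -/
theorem stmt_11 (C lam₁ : ℝ) (hC : 0 < C) (hlam₁ : 0 < lam₁) :
    ∃ c : ℝ, ∀ (Ω : Type) (_ : MeasurableSpace Ω) (μ : Measure Ω),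
      IsProbabilityMeasure μ →
      ∀ (n : ℕ) (lam : ℝ), 0 < lam → lam ≤ lam₁ →
      ∀ ξ : ℕ → Ω → ℝ,
        (∀ i, Measurable (ξ i)) →
        iIndepFun ξ μ →
        (∀ i, IdentDistrib (ξ i) (ξ 0) μ μ) →
        (∫ ω, ξ 0 ω ∂μ = 0) →
        MemLp (ξ 0) 3 μ →
        (∫ ω, (ξ 0 ω) ^ 2 ∂μ ≤ lam₁) →
        (∫ ω, |ξ 0 ω| ^ 3 ∂μ ≤ C / lam ^ ((3 : ℝ) / 2)) →
        ∫ ω, |∑ i ∈ Finset.range n, ξ i ω| ^ 3 ∂μ ≤ c * ((n : ℝ) / lam) ^ ((3 : ℝ) / 2) := by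
  refine ⟨3 * lam₁ ^ 3 + 3 * C, ?_⟩
  intro Ω mΩ μ hprob n lam hlam hlamle ξ hmeas hindep hident hmean hL3 hvar hthird
  have habs3 : ∀ g : Ω → ℝ, MemLp g 3 μ → Integrable (fun ω => |g ω| ^ 3) μ := by
    intro g hg
    have h := hg.integrable_norm_rpow (by norm_num) (by norm_num)
    refine h.congr (Filter.Eventually.of_forall fun ω => ?_)
    show ‖g ω‖ ^ ((3 : ENNReal).toReal) = |g ω| ^ 3
    rw [Real.norm_eq_abs, show ((3 : ENNReal).toReal) = ((3 : ℕ) : ℝ) by simp, Real.rpow_natCast]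
  have hξ3 : ∀ i, MemLp (ξ i) 3 μ := fun i => (hident i).symm.memLp_snd hL3
  have hξ2 : ∀ i, MemLp (ξ i) 2 μ := fun i => (hξ3 i).mono_exponent (by norm_num)
  have hξ1 : ∀ i, Integrable (ξ i) μ :=
    fun i => memLp_one_iff_integrable.mp ((hξ3 i).mono_exponent (by norm_num))
  have hmean_i : ∀ i, ∫ ω, ξ i ω ∂μ = 0 := fun i => ((hident i).integral_eq).trans hmean
  have hsq_i : ∀ i, ∫ ω, (ξ i ω) ^ 2 ∂μ ≤ lam₁ := fun i =>
    (((hident i).comp (measurable_id.pow_const 2)).integral_eq).trans_le hvar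
  have hthird' : ∫ ω, |ξ 0 ω| ^ 3 ∂μ ≤ C / Real.sqrt (lam ^ 3) := by
    rwa [rpow_three_halves'' lam hlam.le] at hthird
  have habs3_i : ∀ i, ∫ ω, |ξ i ω| ^ 3 ∂μ ≤ C / Real.sqrt (lam ^ 3) := fun i =>
    (((hident i).comp (measurable_id.abs.pow_const 3)).integral_eq).trans_le hthird'
  have hS3 : ∀ k, MemLp (fun ω => ∑ i ∈ Finset.range k, ξ i ω) 3 μ :=
    fun k => memLp_finset_sum _ (fun i _ => hξ3 i)
  have hS2 : ∀ k, MemLp (fun ω => ∑ i ∈ Finset.range k, ξ i ω) 2 μ :=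
    fun k => (hS3 k).mono_exponent (by norm_num)
  have hS1 : ∀ k, Integrable (fun ω => ∑ i ∈ Finset.range k, ξ i ω) μ :=
    fun k => memLp_one_iff_integrable.mp ((hS3 k).mono_exponent (by norm_num))
  have hSmeas : ∀ k, Measurable (fun ω => ∑ i ∈ Finset.range k, ξ i ω) :=
    fun k => Finset.measurable_sum _ (fun i _ => hmeas i)
  have hSindep : ∀ k, IndepFun (fun ω => ∑ i ∈ Finset.range k, ξ i ω) (ξ k) μ := by
    intro k
    have h := hindep.indepFun_sum_range_succ hmeas k
    have he : (∑ j ∈ Finset.range k, ξ j) = (fun ω => ∑ i ∈ Finset.range k, ξ i ω) := by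
      ext ω; simp
    rwa [he] at h
  -- second moment bound
  have hvarS : ∀ k : ℕ, ∫ ω, (∑ i ∈ Finset.range k, ξ i ω) ^ 2 ∂μ ≤ k * lam₁ := by
    intro k
    induction k with
    | zero => simp
    | succ m ih =>
      have hmul : Integrable (fun ω => (∑ i ∈ Finset.range m, ξ i ω) * ξ m ω) μ :=
        (hSindep m).integrable_mul (hS1 m) (hξ1 m)
      have hsq : Integrable (fun ω => (∑ i ∈ Finset.range m, ξ i ω) ^ 2) μ :=
        (hS2 m).integrable_sq
      have hsqξ : Integrable (fun ω => (ξ m ω) ^ 2) μ := (hξ2 m).integrable_sq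
      have hexp : (fun ω => (∑ i ∈ Finset.range (m + 1), ξ i ω) ^ 2)
          = fun ω => ((∑ i ∈ Finset.range m, ξ i ω) ^ 2
            + (2 * ((∑ i ∈ Finset.range m, ξ i ω) * ξ m ω) + (ξ m ω) ^ 2)) := by
        funext ω; rw [Finset.sum_range_succ]; ring
      have hg2 : Integrable (fun ω => 2 * ((∑ i ∈ Finset.range m, ξ i ω) * ξ m ω)
          + (ξ m ω) ^ 2) μ := (hmul.const_mul 2).add hsqξ
      rw [hexp, integral_add hsq hg2, integral_add (hmul.const_mul 2) hsqξ, integral_const_mul]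
      have hzero : ∫ ω, (∑ i ∈ Finset.range m, ξ i ω) * ξ m ω ∂μ = 0 := by
        have h2 : (∫ ω, (∑ i ∈ Finset.range m, ξ i ω) * ξ m ω ∂μ)
            = (∫ ω, (∑ i ∈ Finset.range m, ξ i ω) ∂μ) * ∫ ω, ξ m ω ∂μ :=
          (hSindep m).integral_fun_mul_eq_mul_integral (hS1 m).aestronglyMeasurable (hξ1 m).aestronglyMeasurable
        rw [h2, hmean_i m, mul_zero]
      rw [hzero]
      push_cast
      linarith [hsq_i m]
  -- first absolute moment bound
  have habsS : ∀ k : ℕ, ∫ ω, |∑ i ∈ Finset.range k, ξ i ω| ∂μ ≤ Real.sqrt (k * lam₁) := by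
    intro k
    have h0 : 0 ≤ ∫ ω, |∑ i ∈ Finset.range k, ξ i ω| ∂μ := integral_nonneg fun ω => abs_nonneg _
    rw [Real.le_sqrt h0 (by positivity)]
    have habs2 : MemLp (fun ω => |∑ i ∈ Finset.range k, ξ i ω|) 2 μ := (hS2 k).abs
    have hvd := variance_nonneg (fun ω => |∑ i ∈ Finset.range k, ξ i ω|) μ
    rw [variance_eq_sub habs2] at hvd
    simp only [Pi.pow_apply, sq_abs] at hvd
    linarith [hvarS k]
  -- main induction
  have main : ∀ k : ℕ, ∫ ω, |∑ i ∈ Finset.range k, ξ i ω| ^ 3 ∂μ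
      ≤ 3 * Real.sqrt (((k : ℝ) * lam₁) ^ 3) + 3 * (C / Real.sqrt (lam ^ 3)) * k := by
    intro k
    induction k with
    | zero => simp
    | succ m ih =>
      have hpt : ∀ ω, |∑ i ∈ Finset.range (m + 1), ξ i ω| ^ 3
          ≤ |∑ i ∈ Finset.range m, ξ i ω| ^ 3
            + 3 * (((∑ i ∈ Finset.range m, ξ i ω) * |∑ i ∈ Finset.range m, ξ i ω|) * ξ m ω)
            + 3 * ((ξ m ω) ^ 2 * |∑ i ∈ Finset.range m, ξ i ω|)
            + 3 * |ξ m ω| ^ 3 := by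
        intro ω
        rw [Finset.sum_range_succ]
        have h := abs_add_cube_le'' (∑ i ∈ Finset.range m, ξ i ω) (ξ m ω)
        linarith
      have iSS : Integrable
          (fun ω => (∑ i ∈ Finset.range m, ξ i ω) * |∑ i ∈ Finset.range m, ξ i ω|) μ := by
        refine (hS2 m).integrable_sq.mono'
          (((hSmeas m).mul (hSmeas m).abs).aestronglyMeasurable) ?_
        filter_upwards with ω
        rw [Real.norm_eq_abs, abs_mul, abs_abs, abs_mul_abs_self]
        exact le_of_eq (by ring)
      have hindSS : IndepFun
          (fun ω => (∑ i ∈ Finset.range m, ξ i ω) * |∑ i ∈ Finset.range m, ξ i ω|) (ξ m) μ :=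
        (hSindep m).comp (measurable_id.mul measurable_id.abs) measurable_id
      have i2 : Integrable (fun ω =>
          ((∑ i ∈ Finset.range m, ξ i ω) * |∑ i ∈ Finset.range m, ξ i ω|) * ξ m ω) μ :=
        hindSS.integrable_mul iSS (hξ1 m)
      have hindT2S : IndepFun (fun ω => (ξ m ω) ^ 2)
          (fun ω => |∑ i ∈ Finset.range m, ξ i ω|) μ :=
        (hSindep m).symm.comp (measurable_id.pow_const 2) measurable_id.abs
      have i3 : Integrable (fun ω => (ξ m ω) ^ 2 * |∑ i ∈ Finset.range m, ξ i ω|) μ :=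
        hindT2S.integrable_mul (hξ2 m).integrable_sq ((hS1 m).abs)
      have i4 : Integrable (fun ω => |ξ m ω| ^ 3) μ := habs3 _ (hξ3 m)
      have i1 : Integrable (fun ω => |∑ i ∈ Finset.range m, ξ i ω| ^ 3) μ := habs3 _ (hS3 m)
      have i0 : Integrable (fun ω => |∑ i ∈ Finset.range (m + 1), ξ i ω| ^ 3) μ :=
        habs3 _ (hS3 (m + 1))
      have step1 : ∫ ω, |∑ i ∈ Finset.range (m + 1), ξ i ω| ^ 3 ∂μ
          ≤ ∫ ω, (|∑ i ∈ Finset.range m, ξ i ω| ^ 3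
            + 3 * (((∑ i ∈ Finset.range m, ξ i ω) * |∑ i ∈ Finset.range m, ξ i ω|) * ξ m ω)
            + 3 * ((ξ m ω) ^ 2 * |∑ i ∈ Finset.range m, ξ i ω|)
            + 3 * |ξ m ω| ^ 3) ∂μ := by
        refine integral_mono i0 ?_ hpt
        exact ((i1.add (i2.const_mul 3)).add (i3.const_mul 3)).add (i4.const_mul 3)
      have hzero : ∫ ω, ((∑ i ∈ Finset.range m, ξ i ω)
          * |∑ i ∈ Finset.range m, ξ i ω|) * ξ m ω ∂μ = 0 := by
        have h2 : (∫ ω, ((∑ i ∈ Finset.range m, ξ i ω) * |∑ i ∈ Finset.range m, ξ i ω|)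
              * ξ m ω ∂μ)
            = (∫ ω, (∑ i ∈ Finset.range m, ξ i ω) * |∑ i ∈ Finset.range m, ξ i ω| ∂μ)
              * ∫ ω, ξ m ω ∂μ :=
          hindSS.integral_fun_mul_eq_mul_integral iSS.aestronglyMeasurable (hξ1 m).aestronglyMeasurable
        rw [h2, hmean_i m, mul_zero]
      have h3b : ∫ ω, (ξ m ω) ^ 2 * |∑ i ∈ Finset.range m, ξ i ω| ∂μ
          ≤ lam₁ * Real.sqrt ((m : ℝ) * lam₁) := by
        have h2 : (∫ ω, (ξ m ω) ^ 2 * |∑ i ∈ Finset.range m, ξ i ω| ∂μ)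
            = (∫ ω, (ξ m ω) ^ 2 ∂μ) * ∫ ω, |∑ i ∈ Finset.range m, ξ i ω| ∂μ :=
          hindT2S.integral_fun_mul_eq_mul_integral (hξ2 m).integrable_sq.aestronglyMeasurable ((hS1 m).abs).aestronglyMeasurable
        rw [h2]
        exact mul_le_mul (hsq_i m) (habsS m)
          (integral_nonneg fun ω => abs_nonneg _) hlam₁.le
      have step2 : ∫ ω, (|∑ i ∈ Finset.range m, ξ i ω| ^ 3
            + 3 * (((∑ i ∈ Finset.range m, ξ i ω) * |∑ i ∈ Finset.range m, ξ i ω|) * ξ m ω)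
            + 3 * ((ξ m ω) ^ 2 * |∑ i ∈ Finset.range m, ξ i ω|)
            + 3 * |ξ m ω| ^ 3) ∂μ
          = (∫ ω, |∑ i ∈ Finset.range m, ξ i ω| ^ 3 ∂μ)
            + 3 * (∫ ω, (ξ m ω) ^ 2 * |∑ i ∈ Finset.range m, ξ i ω| ∂μ)
            + 3 * (∫ ω, |ξ m ω| ^ 3 ∂μ) := by
        have ja : Integrable (fun ω => |∑ i ∈ Finset.range m, ξ i ω| ^ 3
            + 3 * (((∑ i ∈ Finset.range m, ξ i ω) * |∑ i ∈ Finset.range m, ξ i ω|) * ξ m ω)) μ :=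
          i1.add (i2.const_mul 3)
        have jb : Integrable (fun ω => |∑ i ∈ Finset.range m, ξ i ω| ^ 3
            + 3 * (((∑ i ∈ Finset.range m, ξ i ω) * |∑ i ∈ Finset.range m, ξ i ω|) * ξ m ω)
            + 3 * ((ξ m ω) ^ 2 * |∑ i ∈ Finset.range m, ξ i ω|)) μ := ja.add (i3.const_mul 3)
        rw [integral_add jb (i4.const_mul 3), integral_add ja (i3.const_mul 3),
          integral_add i1 (i2.const_mul 3),
          integral_const_mul, integral_const_mul, integral_const_mul, hzero]
        ring
      have hkey : Real.sqrt (((m : ℝ) * lam₁) ^ 3) + lam₁ * Real.sqrt ((m : ℝ) * lam₁)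
          ≤ Real.sqrt ((((m : ℕ) + 1 : ℝ) * lam₁) ^ 3) := by
        have := sqrt_cube_add'' ((m : ℝ) * lam₁) lam₁ (by positivity) hlam₁.le
        have he : ((m : ℝ) * lam₁ + lam₁) = (((m : ℕ) + 1 : ℝ) * lam₁) := by push_cast; ring
        rw [he] at this
        exact this
      have hB : 0 ≤ C / Real.sqrt (lam ^ 3) := by positivity
      calc ∫ ω, |∑ i ∈ Finset.range (m + 1), ξ i ω| ^ 3 ∂μ
          ≤ (∫ ω, |∑ i ∈ Finset.range m, ξ i ω| ^ 3 ∂μ)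
            + 3 * (∫ ω, (ξ m ω) ^ 2 * |∑ i ∈ Finset.range m, ξ i ω| ∂μ)
            + 3 * (∫ ω, |ξ m ω| ^ 3 ∂μ) := by rw [← step2]; exact step1
        _ ≤ (3 * Real.sqrt (((m : ℝ) * lam₁) ^ 3) + 3 * (C / Real.sqrt (lam ^ 3)) * m)
            + 3 * (lam₁ * Real.sqrt ((m : ℝ) * lam₁))
            + 3 * (C / Real.sqrt (lam ^ 3)) := by
          gcongr
          exact habs3_i m
        _ ≤ 3 * Real.sqrt ((((m : ℕ) + 1 : ℝ) * lam₁) ^ 3)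
            + 3 * (C / Real.sqrt (lam ^ 3)) * ((m : ℕ) + 1 : ℝ) := by nlinarith [hkey]
        _ = 3 * Real.sqrt ((((m + 1 : ℕ) : ℝ) * lam₁) ^ 3)
            + 3 * (C / Real.sqrt (lam ^ 3)) * ((m + 1 : ℕ) : ℝ) := by push_cast; ring
  -- conclude
  rw [rpow_three_halves'' _ (by positivity)]
  refine (main n).trans ?_
  have e1 : Real.sqrt (((n : ℝ) * lam₁) ^ 3) ≤ lam₁ ^ 3 * Real.sqrt (((n : ℝ) / lam) ^ 3) := by
    have hrw : ((n : ℝ) * lam₁) ^ 3 = ((n : ℝ) / lam) ^ 3 * (lam * lam₁) ^ 3 := by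
      field_simp
    rw [hrw, Real.sqrt_mul (by positivity)]
    have h2 : Real.sqrt ((lam * lam₁) ^ 3) ≤ lam₁ ^ 3 := by
      rw [show lam₁ ^ 3 = Real.sqrt ((lam₁ ^ 3) ^ 2) from (Real.sqrt_sq (by positivity)).symm]
      apply Real.sqrt_le_sqrt
      calc (lam * lam₁) ^ 3 = lam ^ 3 * lam₁ ^ 3 := by ring
        _ ≤ lam₁ ^ 3 * lam₁ ^ 3 :=
          mul_le_mul_of_nonneg_right (pow_le_pow_left₀ hlam.le hlamle 3) (by positivity)
        _ = (lam₁ ^ 3) ^ 2 := by ring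
    calc Real.sqrt (((n : ℝ) / lam) ^ 3) * Real.sqrt ((lam * lam₁) ^ 3)
        ≤ Real.sqrt (((n : ℝ) / lam) ^ 3) * lam₁ ^ 3 :=
          mul_le_mul_of_nonneg_left h2 (Real.sqrt_nonneg _)
      _ = lam₁ ^ 3 * Real.sqrt (((n : ℝ) / lam) ^ 3) := mul_comm _ _
  have e2 : (C / Real.sqrt (lam ^ 3)) * n ≤ C * Real.sqrt (((n : ℝ) / lam) ^ 3) := by
    have hn3 : (n : ℝ) ≤ Real.sqrt ((n : ℝ) ^ 3) := by
      rw [Real.le_sqrt (Nat.cast_nonneg n) (by positivity)]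
      rcases Nat.eq_zero_or_pos n with h | h
      · simp [h]
      · have h1 : (1 : ℝ) ≤ (n : ℝ) := by exact_mod_cast h
        nlinarith
    have hrw2 : C / Real.sqrt (lam ^ 3) * n = C * (n : ℝ) / Real.sqrt (lam ^ 3) := by ring
    rw [hrw2, div_pow, Real.sqrt_div (by positivity : (0:ℝ) ≤ ((n:ℝ)) ^ 3), mul_div_assoc]
    gcongr
  nlinarith [Real.sqrt_nonneg (((n : ℝ) / lam) ^ 3), e1, e2]
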